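/- Let C ≥ 1, n ≥ 1 be fixed and let σ₀, μ₀ ∈ (0,1]. Let (ε_j)_{j≥0} be a sequence of reals in (0,1) with ε₁ ≤ ε₀^{7/6} and such that for all j ≥ 1, ε_{j+1} ≤ C·( (1/2)·ε_j·(j+1)^{2n}·σ₀^{−n} + (ε_j/ε_{j−1})^{6/5} + (j+1)^{2(n+1)}·σ₀^{−n−1}·μ₀^{−2}·ε_j^{1/5 − 1/32} )·ε_j. Then there exists ε* > 0, depending only on C, n, σ₀ and μ₀, such that if ε₀ ≤ ε* then ε_j ≤ ε₀^{(7/6)^j} for all j ≥ 1. -/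

import Mathlib

/-- Lemma 6.2: super-exponential decay of the KAM error sequence.  Given `C ≥ 1`,
`n ≥ 1`, `σ₀, μ₀ ∈ (0,1]`, there is `ε* > 0` (depending only on `C, n, σ₀, μ₀`) such
that any sequence `(ε_j) ⊂ (0,1)` with `ε₁ ≤ ε₀^{7/6}` and satisfying the KAM-step
recursion for all `j ≥ 1` obeys `ε_j ≤ ε₀^{(7/6)^j}` for all `j ≥ 1`, provided
`ε₀ ≤ ε*`. -/
theorem stmt_13 (C : ℝ) (hC : 1 ≤ C) (n : ℕ) (hn : 1 ≤ n) (σ₀ μ₀ : ℝ)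
    (hσ : σ₀ ∈ Set.Ioc (0 : ℝ) 1) (hμ : μ₀ ∈ Set.Ioc (0 : ℝ) 1) :
    ∃ εstar : ℝ, 0 < εstar ∧
      ∀ ε : ℕ → ℝ, (∀ j, ε j ∈ Set.Ioo (0 : ℝ) 1) →
        ε 1 ≤ ε 0 ^ ((7 : ℝ) / 6) →
        (∀ j : ℕ, 1 ≤ j →
          ε (j + 1) ≤
            C * ((1 / 2) * ε j * ((j : ℝ) + 1) ^ (2 * n) / σ₀ ^ n
              + (ε j / ε (j - 1)) ^ ((6 : ℝ) / 5)
              + ((j : ℝ) + 1) ^ (2 * (n + 1)) / (σ₀ ^ (n + 1) * μ₀ ^ 2)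
                  * ε j ^ ((1 : ℝ) / 5 - 1 / 32)) * ε j) →
        ε 0 ≤ εstar →
        ∀ j : ℕ, 1 ≤ j → ε j ≤ ε 0 ^ (((7 : ℝ) / 6) ^ j) := by
  obtain ⟨hσ0, hσ1⟩ := hσ
  obtain ⟨hμ0, hμ1⟩ := hμ
  have hC0 : (0:ℝ) < C := lt_of_lt_of_le one_pos hC
  set D : ℝ := σ₀ ^ (n+1) * μ₀ ^ 2 / (3 * C) with hDdef
  have hD0 : 0 < D := by positivity
  have hnum1 : σ₀ ^ (n+1) * μ₀ ^ 2 ≤ 1 := by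
    have h1 : σ₀ ^ (n+1) ≤ 1 := pow_le_one₀ hσ0.le hσ1
    have h2 : μ₀ ^ 2 ≤ 1 := pow_le_one₀ hμ0.le hμ1
    nlinarith [pow_nonneg hσ0.le (n+1), sq_nonneg μ₀]
  set M : ℝ := max 0 (-Real.log D) with hMdef
  have hM0 : 0 ≤ M := le_max_left _ _
  have hM1 : -Real.log D ≤ M := le_max_right _ _
  set K : ℝ := 2880 * (2*(n:ℝ)+2) + 480 * M with hKdef
  have hK0 : 0 ≤ K := by positivity
  refine ⟨Real.exp (-K), Real.exp_pos _, ?_⟩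
  intro ε hε h1 hrec hε0
  have he00 : 0 < ε 0 := (hε 0).1
  -- key bound
  have star : ∀ j : ℕ, ε j ≤ ε 0 ^ (((7:ℝ)/6)^j) →
      ((j:ℝ)+1)^(2*(n+1)) * ε j ^ ((1:ℝ)/480) ≤ D := by
    intro j hj2
    have hx0 : 0 < ε j := (hε j).1
    have hp0 : (0:ℝ) < ((7:ℝ)/6)^j := by positivity
    have hjr : (0:ℝ) ≤ (j:ℝ) := Nat.cast_nonneg j
    have step1 : ε j ^ ((1:ℝ)/480) ≤ Real.exp (-(K * (((7:ℝ)/6)^j) / 480)) := by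
      have h2 : ε j ^ ((1:ℝ)/480) ≤ (ε 0 ^ (((7:ℝ)/6)^j)) ^ ((1:ℝ)/480) :=
        Real.rpow_le_rpow hx0.le hj2 (by norm_num)
      have h3 : (ε 0 ^ (((7:ℝ)/6)^j)) ^ ((1:ℝ)/480)
          ≤ (Real.exp (-K) ^ (((7:ℝ)/6)^j)) ^ ((1:ℝ)/480) := by
        apply Real.rpow_le_rpow (by positivity) _ (by norm_num)
        exact Real.rpow_le_rpow he00.le hε0 hp0.le
      have h4 : (Real.exp (-K) ^ (((7:ℝ)/6)^j)) ^ ((1:ℝ)/480)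
          = Real.exp (-(K * (((7:ℝ)/6)^j) / 480)) := by
        rw [← Real.rpow_mul (Real.exp_nonneg _), ← Real.exp_mul]
        congr 1
        ring
      calc ε j ^ ((1:ℝ)/480) ≤ _ := h2
        _ ≤ _ := h3
        _ = _ := h4
    have hpow : ((j:ℝ)+1)^(2*(n+1)) ≤ Real.exp ((2*(n:ℝ)+2) * j) := by
      have h5 : (j:ℝ)+1 ≤ Real.exp j := by
        simpa using Real.add_one_le_exp (j:ℝ)
      calc ((j:ℝ)+1)^(2*(n+1)) ≤ (Real.exp (j:ℝ))^(2*(n+1)) :=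
            pow_le_pow_left₀ (by positivity) h5 _
        _ = Real.exp (((2*(n+1) : ℕ) : ℝ) * j) := by rw [← Real.exp_nat_mul]
        _ = Real.exp ((2*(n:ℝ)+2) * j) := by push_cast; ring_nf
    have hgeo : 1 + (j:ℝ)/6 ≤ ((7:ℝ)/6)^j := by
      have h6 := one_add_mul_le_pow (by norm_num : (-2:ℝ) ≤ 1/6) j
      have h7 : ((1:ℝ) + 1/6) = 7/6 := by norm_num
      rw [h7] at h6
      linarith
    have hexp2 : Real.exp (-(K * (((7:ℝ)/6)^j) / 480))
        ≤ Real.exp (-(K * (1 + (j:ℝ)/6) / 480)) := by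
      apply Real.exp_le_exp.mpr
      have := mul_le_mul_of_nonneg_left hgeo hK0
      linarith
    calc ((j:ℝ)+1)^(2*(n+1)) * ε j ^ ((1:ℝ)/480)
        ≤ Real.exp ((2*(n:ℝ)+2) * j) * Real.exp (-(K * (1 + (j:ℝ)/6) / 480)) :=
          mul_le_mul hpow (step1.trans hexp2) (by positivity) (by positivity)
      _ = Real.exp ((2*(n:ℝ)+2) * j - K * (1 + (j:ℝ)/6) / 480) := by
          rw [← Real.exp_add, sub_eq_add_neg]
      _ ≤ Real.exp (Real.log D) := by
          apply Real.exp_le_exp.mpr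
          rw [hKdef]
          nlinarith [mul_nonneg hM0 hjr]
      _ = D := Real.exp_log hD0
  have main : ∀ j : ℕ, 1 ≤ j →
      ε j ≤ ε (j-1) ^ ((7:ℝ)/6) ∧ ε j ≤ ε 0 ^ (((7:ℝ)/6)^j) := by
    intro j hj
    induction j, hj using Nat.le_induction with
    | base => exact ⟨by simpa using h1, by simpa using h1⟩
    | succ j hj ih =>
      have hx0 : 0 < ε j := (hε j).1
      have hx1 : ε j < 1 := (hε j).2
      have hy0 : 0 < ε (j-1) := (hε (j-1)).1
      have starj := star j ih.2
      have hb1 : (1:ℝ) ≤ (j:ℝ)+1 := by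
        have : (0:ℝ) ≤ (j:ℝ) := Nat.cast_nonneg j
        linarith
      have e56' : ε j ^ ((5:ℝ)/6) * ε j ^ ((1:ℝ)/6) = ε j := by
        rw [← Real.rpow_add hx0]; norm_num
    -- T1
      have hT1 : (1/2) * ε j * ((j:ℝ)+1)^(2*n) / σ₀^n ≤ ε j ^ ((1:ℝ)/6) / (3*C) := by
        have h56 : ε j ^ ((5:ℝ)/6) ≤ ε j ^ ((1:ℝ)/480) :=
          Real.rpow_le_rpow_of_exponent_ge hx0 hx1.le (by norm_num)
        have hpow2 : ((j:ℝ)+1)^(2*n) ≤ ((j:ℝ)+1)^(2*(n+1)) :=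
          pow_le_pow_right₀ hb1 (by omega)
        have key : (1/2) * (ε j ^ ((5:ℝ)/6)) * ((j:ℝ)+1)^(2*n) ≤ D := by
          calc (1/2) * (ε j ^ ((5:ℝ)/6)) * ((j:ℝ)+1)^(2*n)
              ≤ 1 * (ε j ^ ((1:ℝ)/480)) * ((j:ℝ)+1)^(2*(n+1)) := by
                apply mul_le_mul _ hpow2 (by positivity) (by positivity)
                apply mul_le_mul (by norm_num) h56 (by positivity) (by norm_num)
            _ = ((j:ℝ)+1)^(2*(n+1)) * ε j ^ ((1:ℝ)/480) := by ring
            _ ≤ D := starj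
        have hDσ : D ≤ σ₀^n / (3*C) := by
          rw [hDdef]
          gcongr
          calc σ₀ ^ (n+1) * μ₀^2 ≤ σ₀ ^ (n+1) * 1 := by
                gcongr
                exact pow_le_one₀ hμ0.le hμ1
            _ = σ₀ ^ (n+1) := mul_one _
            _ ≤ σ₀ ^ n := pow_le_pow_of_le_one hσ0.le hσ1 (by omega)
        have k2 : (1/2) * (ε j ^ ((5:ℝ)/6)) * ((j:ℝ)+1)^(2*n) ≤ σ₀^n/(3*C) :=
          key.trans hDσ
        rw [div_le_div_iff₀ (by positivity) (by positivity)]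
        calc (1/2) * ε j * ((j:ℝ)+1)^(2*n) * (3*C)
            = ((1/2) * (ε j ^ ((5:ℝ)/6)) * ((j:ℝ)+1)^(2*n)) * (ε j ^ ((1:ℝ)/6) * (3*C)) := by
              conv_lhs => rw [← e56']
              ring
          _ ≤ (σ₀^n/(3*C)) * (ε j ^ ((1:ℝ)/6) * (3*C)) :=
              mul_le_mul_of_nonneg_right k2 (by positivity)
          _ = ε j ^ ((1:ℝ)/6) * σ₀^n := by
              field_simp
    -- T2
      have hT2 : (ε j / ε (j-1)) ^ ((6:ℝ)/5) ≤ ε j ^ ((1:ℝ)/6) / (3*C) := by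
        have h67 : ε j ^ ((6:ℝ)/7) ≤ ε (j-1) := by
          calc ε j ^ ((6:ℝ)/7) ≤ (ε (j-1) ^ ((7:ℝ)/6)) ^ ((6:ℝ)/7) :=
                Real.rpow_le_rpow hx0.le ih.1 (by norm_num)
            _ = ε (j-1) := by
                rw [← Real.rpow_mul hy0.le]; norm_num
        have hq : ε j ^ ((1:ℝ)/7) = ε j / ε j ^ ((6:ℝ)/7) := by
          rw [show (1:ℝ)/7 = 1 - 6/7 by norm_num, Real.rpow_sub hx0, Real.rpow_one]
        have hdiv : ε j / ε (j-1) ≤ ε j ^ ((1:ℝ)/7) := by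
          rw [hq]
          gcongr
        have hq2 : (ε j / ε (j-1)) ^ ((6:ℝ)/5) ≤ ε j ^ ((6:ℝ)/35) := by
          calc (ε j / ε (j-1)) ^ ((6:ℝ)/5) ≤ (ε j ^ ((1:ℝ)/7)) ^ ((6:ℝ)/5) :=
              Real.rpow_le_rpow (by positivity) hdiv (by norm_num)
            _ = ε j ^ ((6:ℝ)/35) := by rw [← Real.rpow_mul hx0.le]; norm_num
        have h210 : ε j ^ ((1:ℝ)/210) ≤ 1/(3*C) := by
          have a1 : ε j ^ ((1:ℝ)/210) ≤ ε j ^ ((1:ℝ)/480) :=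
            Real.rpow_le_rpow_of_exponent_ge hx0 hx1.le (by norm_num)
          have a2 : ε j ^ ((1:ℝ)/480) ≤ D := by
            have hone : (1:ℝ) ≤ ((j:ℝ)+1)^(2*(n+1)) := one_le_pow₀ hb1
            calc ε j ^ ((1:ℝ)/480)
                ≤ ((j:ℝ)+1)^(2*(n+1)) * ε j ^ ((1:ℝ)/480) :=
                  le_mul_of_one_le_left (by positivity) hone
              _ ≤ D := starj
          have a3 : D ≤ 1/(3*C) := by
            rw [hDdef]
            gcongr
          linarith
        calc (ε j / ε (j-1)) ^ ((6:ℝ)/5) ≤ ε j ^ ((6:ℝ)/35) := hq2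
          _ = ε j ^ ((1:ℝ)/210) * ε j ^ ((1:ℝ)/6) := by
              rw [← Real.rpow_add hx0]; norm_num
          _ ≤ (1/(3*C)) * ε j ^ ((1:ℝ)/6) :=
              mul_le_mul_of_nonneg_right h210 (by positivity)
          _ = ε j ^ ((1:ℝ)/6) / (3*C) := by ring
    -- T3
      have hT3 : ((j:ℝ)+1)^(2*(n+1)) / (σ₀^(n+1) * μ₀^2) * ε j ^ ((1:ℝ)/5 - 1/32)
          ≤ ε j ^ ((1:ℝ)/6) / (3*C) := by
        have e3 : ε j ^ ((1:ℝ)/5 - 1/32) = ε j ^ ((1:ℝ)/480) * ε j ^ ((1:ℝ)/6) := by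
          rw [← Real.rpow_add hx0]; norm_num
        calc ((j:ℝ)+1)^(2*(n+1)) / (σ₀^(n+1) * μ₀^2) * ε j ^ ((1:ℝ)/5 - 1/32)
            = (((j:ℝ)+1)^(2*(n+1)) * ε j ^ ((1:ℝ)/480)) * ε j ^ ((1:ℝ)/6)
                / (σ₀^(n+1) * μ₀^2) := by
              rw [e3]; ring
          _ ≤ D * ε j ^ ((1:ℝ)/6) / (σ₀^(n+1) * μ₀^2) := by
              gcongr
          _ = ε j ^ ((1:ℝ)/6) / (3*C) := by
              rw [hDdef]
              field_simp
      have hbr : ε (j+1) ≤ ε j ^ ((7:ℝ)/6) := by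
        have hsum3 : ε j ^ ((1:ℝ)/6)/(3*C) + ε j ^ ((1:ℝ)/6)/(3*C) + ε j ^ ((1:ℝ)/6)/(3*C)
            = ε j ^ ((1:ℝ)/6) / C := by
          field_simp
          ring
        have hsum : (1/2) * ε j * ((j:ℝ)+1)^(2*n)/σ₀^n + (ε j/ε (j-1))^((6:ℝ)/5)
            + ((j:ℝ)+1)^(2*(n+1))/(σ₀^(n+1)*μ₀^2) * ε j ^ ((1:ℝ)/5 - 1/32)
            ≤ ε j ^ ((1:ℝ)/6) / C := by
          linarith
        calc ε (j+1) ≤ C * ((1/2) * ε j * ((j:ℝ)+1)^(2*n)/σ₀^n + (ε j/ε (j-1))^((6:ℝ)/5)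
              + ((j:ℝ)+1)^(2*(n+1))/(σ₀^(n+1)*μ₀^2) * ε j ^ ((1:ℝ)/5 - 1/32)) * ε j :=
              hrec j hj
          _ ≤ C * (ε j ^ ((1:ℝ)/6) / C) * ε j := by
              gcongr
          _ = ε j ^ ((1:ℝ)/6) * ε j := by
              field_simp
          _ = ε j ^ ((7:ℝ)/6) := by
              rw [show (7:ℝ)/6 = 1/6 + 1 by norm_num, Real.rpow_add hx0, Real.rpow_one]
      constructor
      · simpa [Nat.add_sub_cancel] using hbr
      · calc ε (j+1) ≤ ε j ^ ((7:ℝ)/6) := hbr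
          _ ≤ (ε 0 ^ (((7:ℝ)/6)^j)) ^ ((7:ℝ)/6) :=
              Real.rpow_le_rpow hx0.le ih.2 (by norm_num)
          _ = ε 0 ^ (((7:ℝ)/6)^(j+1)) := by
              rw [← Real.rpow_mul he00.le, ← pow_succ]
  intro j hj
  exact (main j hj).2
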